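/- Let Λ ⊂ Isom(ℝⁿ) be a cocompact reflection (Coxeter) group acting on an apartment 𝒜 ≅ ℝⁿ with fundamental chamber W, and let x,y ∈ W. Let 𝒮(x), 𝒮(y) ⊂ 𝒜 denote the sets of points of type x and type y respectively (i.e., the Λ-orbits of x and y). Then there exist finitely many points b₁,…,b_k ∈ W such that every midpoint (x̄+ȳ)/2 with x̄ ∈ 𝒮(x), ȳ ∈ 𝒮(y) lies in 𝒮(b₁) ∪ … ∪ 𝒮(b_k). Moreover one can take k ≤ 2^n m², where m is the index of a translation subgroup ℤⁿ ≤ Λ. -/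

import Mathlib

open Metric Set

noncomputable section

/-- An isometry equivalence of a real normed space is affine:
`h (a + b) = h a + (linear part) b`. -/
lemma isom_add_eq {E : Type*} [NormedAddCommGroup E] [NormedSpace ℝ E]
    (h : E ≃ᵢ E) (a b : E) :
    h (a + b) = h a + h.toRealLinearIsometryEquiv b := by
  have h1 := h.toRealLinearIsometryEquiv_apply (a + b)
  have h2 := h.toRealLinearIsometryEquiv_apply a
  have h3 := map_add h.toRealLinearIsometryEquiv a b
  rw [h1, h2] at h3
  linear_combination (norm := abel_nf) h3

/-- Let `Λ` be a cocompact reflection group acting on an apartment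
`ℝ^n`, containing as a subgroup of index `m` a group `Λ'` of translations by a lattice
`T ≅ ℤ^n`. Then, for given `x, y`, the midpoints of pairs of points from the `Λ`-orbits of
`x` and of `y` lie in at most `2^n * m^2` further `Λ`-orbits (types). -/
theorem coxeter_midpoints_finitely_many_types (n m : ℕ) (hm : 0 < m)
    (Λ : Subgroup (EuclideanSpace ℝ (Fin n) ≃ᵢ EuclideanSpace ℝ (Fin n)))
    (hcocompact : ∃ R > (0:ℝ), ∀ z : EuclideanSpace ℝ (Fin n),
      ∃ g ∈ Λ, dist (g z) 0 ≤ R)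
    (T : AddSubgroup (EuclideanSpace ℝ (Fin n)))
    (hTdisc : DiscreteTopology T)
    (hTcocpt : ∃ R > (0:ℝ), ∀ z : EuclideanSpace ℝ (Fin n), ∃ v ∈ T, dist z v ≤ R)
    -- `Λ'`, the subgroup of translations by vectors of `T`, is contained in `Λ` ...
    (hTΛ : ∀ v ∈ T, ∃ g ∈ Λ, ∀ z, g z = z + v)
    -- ... and has index `m` in `Λ`: there are `m` coset representatives
    (reps : Finset (EuclideanSpace ℝ (Fin n) ≃ᵢ EuclideanSpace ℝ (Fin n)))
    (hreps : reps.card = m ∧ (∀ g ∈ reps, g ∈ Λ) ∧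
      ∀ g ∈ Λ, ∃ h ∈ reps, ∃ v ∈ T, ∀ z, g z = h (z + v))
    (x y : EuclideanSpace ℝ (Fin n)) :
    ∃ b : Finset (EuclideanSpace ℝ (Fin n)), b.card ≤ 2 ^ n * m ^ 2 ∧
      ∀ x' y' : EuclideanSpace ℝ (Fin n),
        (∃ g ∈ Λ, g x = x') → (∃ g ∈ Λ, g y = y') →
          ∃ c ∈ b, ∃ g ∈ Λ, g c = midpoint ℝ x' y' := by
  classical
  have hE : True := trivial
  -- `T` spans `E` over `ℝ` (from cocompactness)
  set L : Submodule ℤ (EuclideanSpace ℝ (Fin n)) := AddSubgroup.toIntSubmodule T with hL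
  have hLT : (L : Set (EuclideanSpace ℝ (Fin n))) = (T : Set (EuclideanSpace ℝ (Fin n))) := rfl
  have hspan : Submodule.span ℝ (L : Set (EuclideanSpace ℝ (Fin n))) = ⊤ := by
    by_contra hne
    obtain ⟨R, hR, hcov⟩ := hTcocpt
    have : ∃ z : EuclideanSpace ℝ (Fin n), z ∉ Submodule.span ℝ (L : Set (EuclideanSpace ℝ (Fin n))) := by
      by_contra hz
      push_neg at hz
      exact hne (Submodule.eq_top_iff'.mpr hz)
    obtain ⟨z, hz⟩ := this
    set V := Submodule.span ℝ (L : Set (EuclideanSpace ℝ (Fin n)))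
    have hVclosed : IsClosed (V : Set (EuclideanSpace ℝ (Fin n))) := V.closed_of_finiteDimensional
    have hd : 0 < infDist z (V : Set (EuclideanSpace ℝ (Fin n))) := by
      rw [← hVclosed.notMem_iff_infDist_pos ⟨0, V.zero_mem⟩]
      exact hz
    set d := infDist z (V : Set (EuclideanSpace ℝ (Fin n))) with hdd
    set c : ℝ := (R + 1) / d with hc
    have hcpos : 0 < c := by positivity
    obtain ⟨v, hv, hdist⟩ := hcov (c • z)
    have hvV : c⁻¹ • v ∈ V := V.smul_mem _ (Submodule.subset_span hv)
    have h1 : d ≤ dist z (c⁻¹ • v) := infDist_le_dist_of_mem hvV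
    have h2 : dist (c • z) v = c * dist z (c⁻¹ • v) := by
      have hsub : c • (z - c⁻¹ • v) = c • z - v := by
        rw [smul_sub, smul_inv_smul₀ hcpos.ne']
      rw [dist_eq_norm, dist_eq_norm, ← hsub, norm_smul, Real.norm_of_nonneg hcpos.le]
    have : R + 1 ≤ dist (c • z) v := by
      rw [h2, hc]
      calc R + 1 = ((R + 1) / d) * d := by field_simp
        _ ≤ ((R + 1) / d) * dist z (c⁻¹ • v) := by
            apply mul_le_mul_of_nonneg_left h1 (by positivity)
    linarith
  have : DiscreteTopology L := hTdisc
  have : IsZLattice ℝ L := ⟨hspan⟩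
  have hfree : Module.Free ℤ L := ZLattice.module_free ℝ L
  have hfin : Module.Finite ℤ L := ZLattice.module_finite ℝ L
  have hrank : Module.finrank ℤ L = n := by
    rw [ZLattice.rank ℝ L, finrank_euclideanSpace_fin]
  set r := Module.finrank ℤ L with hr
  set B : Module.Basis (Fin r) ℤ L := Module.finBasis ℤ L with hB
  -- decomposition of lattice vectors mod 2T
  have hdecomp : ∀ u ∈ T, ∃ ε : Fin r → Fin 2, ∃ t' ∈ T,
      u = (∑ i, ((ε i : ℤ) • (B i : EuclideanSpace ℝ (Fin n)))) + (2:ℤ) • t' := by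
    intro u hu
    set uL : L := ⟨u, hu⟩ with huL
    set cf : Fin r → ℤ := fun i => B.repr uL i with hcf
    refine ⟨fun i => if cf i % 2 = 0 then 0 else 1,
      (∑ i, (cf i / 2) • (B i : L) : L), (∑ i, (cf i / 2) • (B i : L) : L).2, ?_⟩
    have key : uL = (∑ i, ((if cf i % 2 = 0 then (0:ℤ) else 1) • B i)) +
        (2:ℤ) • ∑ i, (cf i / 2) • B i := by
      rw [Finset.smul_sum, ← Finset.sum_add_distrib]
      conv_lhs => rw [← B.sum_repr uL]
      apply Finset.sum_congr rfl
      intro i _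
      rw [smul_smul, ← add_smul]
      congr 1
      simp only [hcf]
      split <;> omega
    have h4 := congrArg (Subtype.val : L → EuclideanSpace ℝ (Fin n)) key
    simp only [Submodule.coe_add, Submodule.coe_smul] at h4
    rw [show u = (uL : EuclideanSpace ℝ (Fin n)) from rfl, h4]
    congr 1
    rw [AddSubmonoidClass.coe_finset_sum]
    apply Finset.sum_congr rfl
    intro i _
    rw [SetLike.val_smul]
    congr 1
    simp only []
    split <;> simp
  -- linear parts of elements of Λ map T into finitely many cosets of T
  have hconj : ∀ h ∈ Λ, ∀ t ∈ T, ∃ j ∈ reps, ∃ u ∈ T,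
      h.toRealLinearIsometryEquiv t = j 0 + u := by
    intro h hh t ht
    obtain ⟨g₀, hg₀Λ, hg₀⟩ := hTΛ t ht
    have hgΛ : h * g₀ * h⁻¹ ∈ Λ := mul_mem (mul_mem hh hg₀Λ) (inv_mem hh)
    obtain ⟨j, hj, v, hv, hjv⟩ := hreps.2.2 _ hgΛ
    have hg : ∀ z, (h * g₀ * h⁻¹) z = z + h.toRealLinearIsometryEquiv t := by
      intro z
      have : (h * g₀ * h⁻¹) z = h (g₀ (h.symm z)) := rfl
      rw [this, hg₀, isom_add_eq, h.apply_symm_apply]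
    refine ⟨j, hj, v, hv, ?_⟩
    have h1 := hjv (-v)
    have h2 := hg (-v)
    rw [h1] at h2
    simp only [neg_add_cancel] at h2
    linear_combination (norm := abel_nf) - h2
  -- the finite set of midpoint types
  set F : (EuclideanSpace ℝ (Fin n) ≃ᵢ EuclideanSpace ℝ (Fin n)) × (EuclideanSpace ℝ (Fin n) ≃ᵢ EuclideanSpace ℝ (Fin n)) × (Fin r → Fin 2) → EuclideanSpace ℝ (Fin n) :=
    fun p => midpoint ℝ x (p.1 y + p.2.1 0 + ∑ i, ((p.2.2 i : ℤ) • (B i : EuclideanSpace ℝ (Fin n)))) with hF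
  refine ⟨Finset.image F (reps ×ˢ reps ×ˢ (Finset.univ : Finset (Fin r → Fin 2))), ?_, ?_⟩
  · calc (Finset.image F _).card ≤ (reps ×ˢ reps ×ˢ (Finset.univ : Finset (Fin r → Fin 2))).card :=
        Finset.card_image_le
      _ = m * (m * 2 ^ n) := by
          rw [Finset.card_product, Finset.card_product, hreps.1, Finset.card_univ]
          congr 2
          rw [Fintype.card_fun, Fintype.card_fin, Fintype.card_fin, hrank]
      _ ≤ 2 ^ n * m ^ 2 := by ring_nf; omega
  · rintro x' y' ⟨g₁, hg₁, rfl⟩ ⟨g₂, hg₂, rfl⟩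
    obtain ⟨h, hh, v, hv, hhv⟩ := hreps.2.2 (g₁⁻¹ * g₂) (mul_mem (inv_mem hg₁) hg₂)
    have hy' : g₁⁻¹ (g₂ y) = h y + h.toRealLinearIsometryEquiv v := by
      have : g₁⁻¹ (g₂ y) = (g₁⁻¹ * g₂) y := rfl
      rw [this, hhv y, isom_add_eq]
    obtain ⟨j, hj, u, hu, hju⟩ := hconj h (hreps.2.1 h hh) v hv
    obtain ⟨ε, t', ht', hdec⟩ := hdecomp u hu
    set s : EuclideanSpace ℝ (Fin n) := ∑ i, ((ε i : ℤ) • (B i : EuclideanSpace ℝ (Fin n))) with hs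
    set c : EuclideanSpace ℝ (Fin n) := midpoint ℝ x (h y + j 0 + s) with hcdef
    obtain ⟨g₀, hg₀Λ, hg₀⟩ := hTΛ t' ht'
    refine ⟨c, Finset.mem_image.mpr ⟨(h, j, ε), by
      simp [Finset.mem_product, hh, hj], rfl⟩, g₁ * g₀, mul_mem hg₁ hg₀Λ, ?_⟩
    have hct : (g₁ * g₀) c = g₁ (c + t') := by
      have : (g₁ * g₀) c = g₁ (g₀ c) := rfl
      rw [this, hg₀]
    rw [hct]
    have hmid : c + t' = midpoint ℝ x (g₁⁻¹ (g₂ y)) := by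
      rw [hy', hju, hdec, hcdef, midpoint_eq_smul_add, midpoint_eq_smul_add]
      have h2 : ((2:ℤ) • t' : EuclideanSpace ℝ (Fin n)) = (2:ℝ) • t' := by
        rw [← Int.cast_smul_eq_zsmul ℝ]; norm_num
      rw [h2, invOf_eq_inv]
      module
    rw [hmid, IsometryEquiv.map_midpoint g₁ x (g₁⁻¹ (g₂ y))]
    congr 1
    exact g₁.apply_symm_apply (g₂ y)
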